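/- arXiv:1912.12195 — 2 statements merged into one kernel-verified Lean document; each statement's English description precedes it below -/
import Mathlib

section
/- Let u be a smooth function on S² and t > 0, and suppose both u and u_{Φ_{N,t}} := u∘Φ_{N,t} + (1/2) log|det dΦ_{N,t}| are centered, i.e. ∫_{S²} e^{2u} x dA = 0 and ∫_{S²} e^{2u_{Φ_{N,t}}} x dA = 0, where x is the position vector in R³. Then t = 1, i.e. Φ_{N,t} is the identity. -/
set_option maxHeartbeats 1000000

open MeasureTheory Real

noncomputable section

abbrev E3 := EuclideanSpace ℝ (Fin 3)

noncomputable def sphereMeasure : Measure (Metric.sphere (0 : E3) 1) :=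
  (volume : Measure E3).toSphere

/-- Stereographic projection from the north pole. -/
noncomputable def stereoE (x : E3) : ℂ :=
  ((x 0 : ℂ) + (x 1 : ℂ) * Complex.I) / ((1 : ℂ) - (x 2 : ℂ))

/-- Inverse stereographic projection. -/
noncomputable def stereoInvE (z : ℂ) : E3 :=
  (EuclideanSpace.equiv (Fin 3) ℝ).symm
    ![2 * z.re / (1 + Complex.normSq z), 2 * z.im / (1 + Complex.normSq z),
      (Complex.normSq z - 1) / (Complex.normSq z + 1)]

/-- The scale transformation `Φ_{N,t}` (fixing the north pole). -/
noncomputable def scaleMapE (t : ℝ) (x : E3) : E3 :=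
  if x 2 = 1 then x else stereoInvE ((t : ℂ) * stereoE x)

/- ## Auxiliary lemmas -/

lemma sphere_coord_sq {x : E3} (hx : x ∈ Metric.sphere (0:E3) 1) :
    x 0 ^ 2 + x 1 ^ 2 + x 2 ^ 2 = 1 := by
  have h : ‖x‖ = 1 := by simpa using hx
  have h2 : Real.sqrt (∑ i, ‖x i‖ ^ 2) = 1 := by rw [← EuclideanSpace.norm_eq, h]
  rw [Real.sqrt_eq_one] at h2
  simpa [Fin.sum_univ_three, sq_abs] using h2

lemma denom_pos {a y : ℝ} (ha : 0 < a) (hy1 : -1 ≤ y) (hy2 : y ≤ 1) :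
    0 < a * (1 + y) + (1 - y) := by
  rcases lt_or_eq_of_le hy2 with h | h
  · have : 0 ≤ a * (1 + y) := mul_nonneg ha.le (by linarith)
    linarith
  · rw [← h]; nlinarith

lemma scaleMapE_coord (s : ℝ) (hs : 0 < s) (x : E3)
    (hx : x 0 ^ 2 + x 1 ^ 2 + x 2 ^ 2 = 1) :
    scaleMapE s x 2
      = (s ^ 2 * (1 + x 2) - (1 - x 2)) / (s ^ 2 * (1 + x 2) + (1 - x 2)) := by
  have hy1 : x 2 ^ 2 ≤ 1 := by nlinarith [sq_nonneg (x 0), sq_nonneg (x 1)]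
  have hym : -1 ≤ x 2 := by nlinarith
  have hyM : x 2 ≤ 1 := by nlinarith
  by_cases h1 : x 2 = 1
  · rw [scaleMapE, if_pos h1, h1]
    have hss : (s:ℝ) ^ 2 ≠ 0 := by positivity
    field_simp
    ring
  · have hlt : x 2 < 1 := lt_of_le_of_ne hyM h1
    have h1y : (0:ℝ) < 1 - x 2 := by linarith
    rw [scaleMapE, if_neg h1]
    have hz : Complex.normSq ((s:ℂ) * stereoE x)
        = s ^ 2 * ((1 - x 2 ^ 2) / (1 - x 2) ^ 2) := by
      rw [stereoE, map_mul, Complex.normSq_div]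
      have e1 : Complex.normSq ((x 0 : ℂ) + (x 1 : ℂ) * Complex.I) = x 0 ^ 2 + x 1 ^ 2 :=
        Complex.normSq_add_mul_I _ _
      have e2 : ((1:ℂ) - (x 2 : ℂ)) = ((1 - x 2 : ℝ) : ℂ) := by push_cast; ring
      have e3 : x 0 ^ 2 + x 1 ^ 2 = 1 - x 2 ^ 2 := by linarith
      rw [e1, e2, Complex.normSq_ofReal, Complex.normSq_ofReal, e3]
      ring
    have hcoord : stereoInvE ((s:ℂ) * stereoE x) 2
        = (Complex.normSq ((s:ℂ)*stereoE x) - 1) / (Complex.normSq ((s:ℂ)*stereoE x) + 1) := rfl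
    rw [hcoord, hz]
    have hD : 0 < s ^ 2 * (1 + x 2) + (1 - x 2) := denom_pos (by positivity) hym hyM
    have hW : s ^ 2 * ((1 - x 2 ^ 2) / (1 - x 2) ^ 2)
        = (s ^ 2 * (1 + x 2)) / (1 - x 2) := by
      field_simp
      ring
    rw [hW]
    have hDne : s ^ 2 * (1 + x 2) + (1 - x 2) ≠ 0 := hD.ne'
    rw [div_eq_div_iff]
    · field_simp
    · rw [div_add' _ _ _ h1y.ne', one_mul]
      exact div_ne_zero hDne h1y.ne'
    · exact hDne

open Pointwise in
lemma sphereMeasure_singleton (p : Metric.sphere (0:E3) 1) : sphereMeasure {p} = 0 := by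
  have happ := Measure.toSphere_apply' (μ := (volume : Measure E3)) (measurableSet_singleton p)
  rw [sphereMeasure, happ]
  have hsub : (Set.Ioo (0:ℝ) 1) • (Subtype.val '' ({p} : Set (Metric.sphere (0:E3) 1)))
      ⊆ ((Submodule.span ℝ {(p:E3)} : Submodule ℝ E3) : Set E3) := by
    intro z hz
    rw [Set.mem_smul] at hz
    obtain ⟨r, hr, w, hw, rfl⟩ := hz
    obtain ⟨q, hq, rfl⟩ := hw
    have hqp : q = p := hq
    subst hqp
    exact SetLike.mem_coe.mpr (Submodule.smul_mem _ r (Submodule.mem_span_singleton_self _))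
  have hp0 : (p:E3) ≠ 0 := by
    intro h
    have := p.2
    rw [mem_sphere_zero_iff_norm] at this
    rw [h] at this
    simp at this
  have hne : (Submodule.span ℝ {(p:E3)} : Submodule ℝ E3) ≠ ⊤ := by
    intro h
    have h1 := finrank_span_singleton (K := ℝ) hp0
    rw [h, finrank_top] at h1
    have h3 : Module.finrank ℝ E3 = 3 := by simp [finrank_euclideanSpace]
    omega
  rw [measure_mono_null hsub (Measure.addHaar_submodule _ _ hne), mul_zero]

instance : IsFiniteMeasure sphereMeasure := by unfold sphereMeasure; infer_instance

instance : IsFiniteMeasureOnCompacts sphereMeasure :=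
  ⟨fun _K _ => lt_of_le_of_lt (measure_mono (Set.subset_univ _)) (measure_lt_top _ _)⟩

lemma sphereMeasure_univ_pos : 0 < sphereMeasure Set.univ := by
  rw [sphereMeasure, Measure.toSphere_apply_univ]
  refine ENNReal.mul_pos ?_ (Metric.measure_ball_pos _ _ one_pos).ne'
  have h3 : Module.finrank ℝ E3 = 3 := by simp [finrank_euclideanSpace]
  simp [h3]

lemma integrable_of_continuous {F : Type*} [NormedAddCommGroup F]
    (g : Metric.sphere (0:E3) 1 → F) (hg : Continuous g) : Integrable g sphereMeasure :=
  hg.integrable_of_hasCompactSupport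
    (IsCompact.of_isClosed_subset isCompact_univ (isClosed_tsupport g) (Set.subset_univ _))

/-- The north pole as a point of the sphere. -/
def poleN : Metric.sphere (0:E3) 1 :=
  ⟨(EuclideanSpace.equiv (Fin 3) ℝ).symm ![0,0,1], by
    rw [mem_sphere_zero_iff_norm, EuclideanSpace.norm_eq]
    simp [Fin.sum_univ_three]⟩

/-- The south pole as a point of the sphere. -/
def poleS : Metric.sphere (0:E3) 1 :=
  ⟨(EuclideanSpace.equiv (Fin 3) ℝ).symm ![0,0,-1], by
    rw [mem_sphere_zero_iff_norm, EuclideanSpace.norm_eq]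
    simp [Fin.sum_univ_three]⟩

lemma eq_pole {p : Metric.sphere (0:E3) 1} (h : (p:E3) 2 = 1 ∨ (p:E3) 2 = -1) :
    p = poleN ∨ p = poleS := by
  have hsq := sphere_coord_sq p.2
  have h0 : (p:E3) 0 = 0 := by
    rcases h with h | h <;> nlinarith [sq_nonneg ((p:E3) 0), sq_nonneg ((p:E3) 1)]
  have h1 : (p:E3) 1 = 0 := by
    rcases h with h | h <;> nlinarith [sq_nonneg ((p:E3) 0), sq_nonneg ((p:E3) 1)]
  rcases h with h | h
  · left
    apply Subtype.ext
    apply PiLp.ext; intro i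
    fin_cases i <;> simp [poleN, h0, h1, h]
  · right
    apply Subtype.ext
    apply PiLp.ext; intro i
    fin_cases i <;> simp [poleS, h0, h1, h]

theorem centered_both_implies_scale_is_identity
    (t : ℝ) (ht : 0 < t) (u uΦ : E3 → ℝ)
    (hu : Continuous u) (huΦ : Continuous uΦ)
    (hpull : ∀ f : E3 → ℝ, Continuous f →
      (∫ p : Metric.sphere (0 : E3) 1,
          Real.exp (2 * uΦ (p : E3)) * f (p : E3) ∂sphereMeasure)
        = ∫ p : Metric.sphere (0 : E3) 1,
            Real.exp (2 * u (p : E3)) * f (scaleMapE t⁻¹ (p : E3)) ∂sphereMeasure)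
    (hcenter_u : (∫ p : Metric.sphere (0 : E3) 1,
        Real.exp (2 * u (p : E3)) • (p : E3) ∂sphereMeasure) = 0)
    (hcenter_uΦ : (∫ p : Metric.sphere (0 : E3) 1,
        Real.exp (2 * uΦ (p : E3)) • (p : E3) ∂sphereMeasure) = 0) :
    t = 1 := by
  have hs : (0:ℝ) < t⁻¹ := inv_pos.mpr ht
  set s : ℝ := t⁻¹ with hsdef
  set a : ℝ := s ^ 2 with hadef
  have ha : (0:ℝ) < a := by positivity
  have hc2 : Continuous fun x : E3 => x 2 :=
    (EuclideanSpace.proj (2 : Fin 3) : E3 →L[ℝ] ℝ).continuous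
  have hcoe : Continuous fun p : Metric.sphere (0:E3) 1 => (p : E3) := continuous_subtype_val
  -- coordinate functions on the sphere
  have hy : Continuous fun p : Metric.sphere (0:E3) 1 => (p:E3) 2 := hc2.comp hcoe
  -- bounds on the third coordinate
  have hbound : ∀ p : Metric.sphere (0:E3) 1, -1 ≤ (p:E3) 2 ∧ (p:E3) 2 ≤ 1 := by
    intro p
    have hsq := sphere_coord_sq p.2
    constructor <;> nlinarith [sq_nonneg ((p:E3) 0), sq_nonneg ((p:E3) 1)]
  -- denominator
  have hD : ∀ p : Metric.sphere (0:E3) 1, 0 < a * (1 + (p:E3) 2) + (1 - (p:E3) 2) :=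
    fun p => denom_pos ha (hbound p).1 (hbound p).2
  have hDcont : Continuous fun p : Metric.sphere (0:E3) 1 =>
      a * (1 + (p:E3) 2) + (1 - (p:E3) 2) := by continuity
  -- third component of the two centering conditions
  have hcomp : ∀ v : E3 → ℝ, Continuous v →
      (∫ p : Metric.sphere (0:E3) 1, Real.exp (2 * v p) • (p:E3) ∂sphereMeasure) = 0 →
      (∫ p : Metric.sphere (0:E3) 1, Real.exp (2 * v p) * ((p:E3) 2) ∂sphereMeasure) = 0 := by
    intro v hv hz
    have hi : Integrable (fun p : Metric.sphere (0:E3) 1 => Real.exp (2 * v p) • (p:E3))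
        sphereMeasure := by
      apply integrable_of_continuous
      exact ((Real.continuous_exp.comp ((continuous_const.mul (hv.comp hcoe)))).smul hcoe)
    have hL := (EuclideanSpace.proj (2 : Fin 3) : E3 →L[ℝ] ℝ).integral_comp_comm hi
    rw [hz] at hL
    simpa [smul_eq_mul] using hL
  have h1 : (∫ p : Metric.sphere (0:E3) 1,
      Real.exp (2 * u p) * ((p:E3) 2) ∂sphereMeasure) = 0 := hcomp u hu hcenter_u
  have h2 : (∫ p : Metric.sphere (0:E3) 1,
      Real.exp (2 * uΦ p) * ((p:E3) 2) ∂sphereMeasure) = 0 := hcomp uΦ huΦ hcenter_uΦ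
  have h3 := hpull (fun x => x 2) hc2
  rw [h2] at h3
  -- rewrite the pulled-back integrand using the coordinate formula
  have hsc : ∀ p : Metric.sphere (0:E3) 1,
      scaleMapE s (p:E3) 2
        = (a * (1 + (p:E3) 2) - (1 - (p:E3) 2)) / (a * (1 + (p:E3) 2) + (1 - (p:E3) 2)) := by
    intro p
    rw [scaleMapE_coord s hs _ (sphere_coord_sq p.2)]
  have h3' : (0:ℝ) = ∫ p : Metric.sphere (0:E3) 1, Real.exp (2 * u p) *
          ((a * (1 + (p:E3) 2) - (1 - (p:E3) 2)) / (a * (1 + (p:E3) 2) + (1 - (p:E3) 2)))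
          ∂sphereMeasure := by
    rw [h3]
    exact integral_congr_ae (Filter.Eventually.of_forall fun p => by simp only; rw [hsc p])
  clear h3
  have h3 := h3'
  -- the auxiliary nonnegative function
  set g : Metric.sphere (0:E3) 1 → ℝ := fun p =>
    Real.exp (2 * u p) * ((1 - ((p:E3) 2) ^ 2) / (a * (1 + (p:E3) 2) + (1 - (p:E3) 2)))
    with hgdef
  have hgcont : Continuous g := by
    apply ((Real.continuous_exp.comp (continuous_const.mul (hu.comp hcoe))).mul _)
    exact (continuous_const.sub (hy.pow 2)).div hDcont (fun p => (hD p).ne')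
  have hFcont : Continuous fun p : Metric.sphere (0:E3) 1 => Real.exp (2 * u p) *
      ((a * (1 + (p:E3) 2) - (1 - (p:E3) 2)) / (a * (1 + (p:E3) 2) + (1 - (p:E3) 2))) := by
    apply ((Real.continuous_exp.comp (continuous_const.mul (hu.comp hcoe))).mul _)
    exact ((continuous_const.mul (continuous_const.add hy)).sub
      (continuous_const.sub hy)).div hDcont (fun p => (hD p).ne')
  have hycont : Continuous fun p : Metric.sphere (0:E3) 1 =>
      Real.exp (2 * u p) * ((p:E3) 2) :=
    (Real.continuous_exp.comp (continuous_const.mul (hu.comp hcoe))).mul hy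
  -- the pointwise identity
  have hpt : ∀ p : Metric.sphere (0:E3) 1,
      Real.exp (2 * u p) *
        ((a * (1 + (p:E3) 2) - (1 - (p:E3) 2)) / (a * (1 + (p:E3) 2) + (1 - (p:E3) 2)))
      - Real.exp (2 * u p) * ((p:E3) 2) = (a - 1) * g p := by
    intro p
    have hDp := (hD p).ne'
    simp only [hgdef]
    field_simp
    ring
  -- integrate the identity
  have h4 : (a - 1) * ∫ p : Metric.sphere (0:E3) 1, g p ∂sphereMeasure = 0 := by
    rw [← integral_const_mul]
    have : (∫ p : Metric.sphere (0:E3) 1, (a - 1) * g p ∂sphereMeasure)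
        = ∫ p : Metric.sphere (0:E3) 1, (Real.exp (2 * u p) *
          ((a * (1 + (p:E3) 2) - (1 - (p:E3) 2)) / (a * (1 + (p:E3) 2) + (1 - (p:E3) 2)))
          - Real.exp (2 * u p) * ((p:E3) 2)) ∂sphereMeasure :=
      integral_congr_ae (Filter.Eventually.of_forall fun p => (hpt p).symm)
    rw [this, integral_sub (integrable_of_continuous _ hFcont) (integrable_of_continuous _ hycont),
      h1, ← h3, sub_zero]
  -- positivity of ∫ g
  have hgnn : ∀ p, 0 ≤ g p := by
    intro p
    simp only [hgdef]
    apply mul_nonneg (Real.exp_nonneg _)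
    apply div_nonneg _ (hD p).le
    nlinarith [(hbound p).1, (hbound p).2]
  have hgsupp : 0 < sphereMeasure (Function.support g) := by
    have hopen : IsOpen (Function.support g) := hgcont.isOpen_support
    have hcompl : sphereMeasure (Function.support g)ᶜ = 0 := by
      refine measure_mono_null (t := ({poleN, poleS} : Set (Metric.sphere (0:E3) 1))) ?_ ?_
      · intro p hp
        have hgp : g p = 0 := Function.notMem_support.mp hp
        simp only [hgdef] at hgp
        have hexp : Real.exp (2 * u p) ≠ 0 := Real.exp_ne_zero _
        have hdiv : (1 - ((p:E3) 2) ^ 2) / (a * (1 + (p:E3) 2) + (1 - (p:E3) 2)) = 0 := by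
          rcases mul_eq_zero.mp hgp with h | h
          · exact absurd h hexp
          · exact h
        have hnum : 1 - ((p:E3) 2) ^ 2 = 0 := by
          have := div_eq_zero_iff.mp hdiv
          rcases this with h | h
          · exact h
          · exact absurd h (hD p).ne'
        have hfac : ((p:E3) 2 - 1) * ((p:E3) 2 + 1) = 0 := by nlinarith
        have : (p:E3) 2 = 1 ∨ (p:E3) 2 = -1 := by
          rcases mul_eq_zero.mp hfac with h | h
          · left; linarith
          · right; linarith
        exact eq_pole this
      · exact measure_union_null (sphereMeasure_singleton _) (sphereMeasure_singleton _)
    have := measure_add_measure_compl (μ := sphereMeasure) hopen.measurableSet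
    rw [hcompl, add_zero] at this
    rw [this]
    exact sphereMeasure_univ_pos
  have hgpos : 0 < ∫ p : Metric.sphere (0:E3) 1, g p ∂sphereMeasure :=
    (integral_pos_iff_support_of_nonneg hgnn (integrable_of_continuous _ hgcont)).mpr hgsupp
  have ha1 : a = 1 := by
    rcases mul_eq_zero.mp h4 with h | h
    · linarith
    · exact absurd h hgpos.ne'
  have hs1 : s = 1 := by nlinarith [sq_nonneg (s - 1), sq_nonneg (s + 1)]
  rw [hsdef] at hs1
  field_simp at hs1
  linarith
end
end

section
/- Let O ∈ O(3) and suppose there exist a point N ∈ S², a unit tangent vector v ∈ T_N S², and δ > 0 small such that: |O(N) − N| ≲ δ; O(v) = a v + O(δ) for some a > 0; and O preserves the orientation of T_N S². Then |O − I| ≲ δ. -/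
open Matrix

private lemma sq_le_dot (x : Fin 3 → ℝ) (i : Fin 3) : x i ^ 2 ≤ x ⬝ᵥ x := by
  have h : x ⬝ᵥ x = ∑ k, x k ^ 2 := by simp [dotProduct, sq]
  rw [h]
  exact Finset.single_le_sum (fun k _ => sq_nonneg (x k)) (Finset.mem_univ i)

private lemma comp_le_of_dot {x : Fin 3 → ℝ} {b : ℝ} (hb : 0 ≤ b) (h : x ⬝ᵥ x ≤ b ^ 2)
    (i : Fin 3) : |x i| ≤ b := by
  have h1 := sq_le_dot x i
  rw [abs_le]
  constructor <;> nlinarith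

private lemma mulbound : ∀ (s t bs bt : ℝ), |s| ≤ bs → |t| ≤ bt → |s * t| ≤ bs * bt := by
  intro s t bs bt h1 h2
  rw [abs_mul]
  exact mul_le_mul h1 h2 (abs_nonneg t) ((abs_nonneg s).trans h1)

private lemma dotbound {x y : Fin 3 → ℝ} {bx by' : ℝ}
    (hx : ∀ i, |x i| ≤ bx) (hy : ∀ i, |y i| ≤ by') : |x ⬝ᵥ y| ≤ 3 * bx * by' := by
  rw [vec3_dotProduct]
  calc |x 0 * y 0 + x 1 * y 1 + x 2 * y 2|
      ≤ |x 0 * y 0 + x 1 * y 1| + |x 2 * y 2| := abs_add_le _ _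
    _ ≤ |x 0 * y 0| + |x 1 * y 1| + |x 2 * y 2| := by
        have := abs_add_le (x 0 * y 0) (x 1 * y 1); linarith
    _ ≤ bx * by' + bx * by' + bx * by' := by
        have h0 := mulbound _ _ _ _ (hx 0) (hy 0)
        have h1 := mulbound _ _ _ _ (hx 1) (hy 1)
        have h2 := mulbound _ _ _ _ (hx 2) (hy 2)
        linarith
    _ = 3 * bx * by' := by ring

private lemma crossbound {x y : Fin 3 → ℝ} {bx by' : ℝ}
    (hx : ∀ i, |x i| ≤ bx) (hy : ∀ i, |y i| ≤ by') (i : Fin 3) :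
    |(crossProduct x y) i| ≤ 2 * bx * by' := by
  have key2 : ∀ (s t : ℝ), |s| ≤ bx * by' → |t| ≤ bx * by' → |s - t| ≤ 2 * bx * by' := by
    intro s t h1 h2
    calc |s - t| ≤ |s| + |t| := abs_sub _ _
      _ ≤ 2 * bx * by' := by linarith
  rw [cross_apply]
  fin_cases i <;> simp only [Matrix.cons_val_zero, Matrix.cons_val_one, Matrix.head_cons] <;>
    first
    | exact key2 _ _ (mulbound _ _ _ _ (hx 1) (hy 2)) (mulbound _ _ _ _ (hx 2) (hy 1))
    | exact key2 _ _ (mulbound _ _ _ _ (hx 2) (hy 0)) (mulbound _ _ _ _ (hx 0) (hy 2))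
    | exact key2 _ _ (mulbound _ _ _ _ (hx 0) (hy 1)) (mulbound _ _ _ _ (hx 1) (hy 0))

private lemma gram (x N v : Fin 3 → ℝ) :
    (x ⬝ᵥ crossProduct N v) ^ 2 =
      (x ⬝ᵥ x) * (N ⬝ᵥ N) * (v ⬝ᵥ v) + 2 * (x ⬝ᵥ N) * (N ⬝ᵥ v) * (x ⬝ᵥ v)
        - (x ⬝ᵥ N) ^ 2 * (v ⬝ᵥ v) - (x ⬝ᵥ v) ^ 2 * (N ⬝ᵥ N) - (x ⬝ᵥ x) * (N ⬝ᵥ v) ^ 2 := by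
  simp_rw [cross_apply, vec3_dotProduct]
  norm_num [Matrix.cons_val_two, Matrix.tail_cons, Matrix.head_cons]
  ring

private lemma frame_complete (N v w : Fin 3 → ℝ)
    (hNN' : N 0 * N 0 + N 1 * N 1 + N 2 * N 2 = 1)
    (hvv' : v 0 * v 0 + v 1 * v 1 + v 2 * v 2 = 1)
    (hww' : w 0 * w 0 + w 1 * w 1 + w 2 * w 2 = 1)
    (hNv' : N 0 * v 0 + N 1 * v 1 + N 2 * v 2 = 0)
    (hNw' : N 0 * w 0 + N 1 * w 1 + N 2 * w 2 = 0)
    (hvw' : v 0 * w 0 + v 1 * w 1 + v 2 * w 2 = 0) :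
    ∀ k l : Fin 3, N k * N l + v k * v l + w k * w l = if k = l then 1 else 0 := by
  have hM : (Matrix.of ![N, v, w]) * (Matrix.of ![N, v, w])ᵀ = 1 := by
    ext k l
    rw [Matrix.mul_apply, Fin.sum_univ_three]
    fin_cases k <;> fin_cases l <;>
      simp [Matrix.one_apply, Fin.ext_iff] <;>
      first
      | linear_combination hNN'
      | linear_combination hvv'
      | linear_combination hww'
      | linear_combination hNv'
      | linear_combination hNw'
      | linear_combination hvw'
  have hM' : (Matrix.of ![N, v, w])ᵀ * (Matrix.of ![N, v, w]) = 1 := mul_eq_one_comm.mp hM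
  intro k l
  have h := congrFun (congrFun hM' k) l
  rw [Matrix.mul_apply, Fin.sum_univ_three] at h
  simp only [Matrix.transpose_apply, Matrix.of_apply, Matrix.cons_val_zero,
    Matrix.cons_val_one, Matrix.head_cons, Matrix.one_apply, Matrix.cons_val_two,
    Matrix.tail_cons] at h
  convert h using 2


private lemma a_bound {a t s δ : ℝ} (ha : 0 < a) (hδ : 0 < δ) (hδ0 : δ ≤ 1/1000)
    (hkey : a ^ 2 + 2 * a * t + s = 1)
    (htl : -(3 * 1 * δ) ≤ t) (htu : t ≤ 3 * 1 * δ)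
    (hsnn : 0 ≤ s) (hsu : s ≤ 3 * δ * δ) : |a - 1| ≤ 13 * δ := by
  have ha2 : a ≤ 2 := by nlinarith
  rw [abs_le]
  constructor <;> nlinarith

private lemma gamma_bound {γ α β E δ : ℝ} (hδ : 0 < δ) (hδ0 : δ ≤ 1/1000)
    (hγsq : γ ^ 2 = 1 - α ^ 2 - β ^ 2)
    (hαl : -(3 * 1 * δ) ≤ α) (hαu : α ≤ 3 * 1 * δ)
    (hβl : -(3 * 1 * (14 * δ)) ≤ β) (hβu : β ≤ 3 * 1 * (14 * δ))
    (hpos : 0 < γ + E) (hEu : E ≤ 3 * (14 * δ) * (2 * 1 * 1)) :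
    2 - 2 * γ ≤ (60 * δ) ^ 2 := by
  have hα2 : α ^ 2 ≤ 9 * δ ^ 2 := by nlinarith
  have hβ2 : β ^ 2 ≤ 1764 * δ ^ 2 := by nlinarith
  have hδ2 : δ ^ 2 ≤ (1/1000) * δ := by nlinarith
  have hγpos : (9 : ℝ)/10 ≤ γ := by
    by_contra hc
    push_neg at hc
    have h1 : 0 < 9/10 - γ := by linarith
    have h2 : 0 < γ + 84 * δ := by linarith
    nlinarith [mul_pos h1 h2]
  have hγle : γ ≤ 1 := by nlinarith [sq_nonneg α, sq_nonneg β]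
  nlinarith


private lemma entry_key (O : Matrix (Fin 3) (Fin 3) ℝ) (N v w : Fin 3 → ℝ)
    (hcomp : ∀ k l : Fin 3, N k * N l + v k * v l + w k * w l = if k = l then 1 else 0)
    (i j : Fin 3) :
    (O - 1) i j = (O *ᵥ N - N) i * N j + (O *ᵥ v - v) i * v j + (O *ᵥ w - w) i * w j := by
  have e0 := hcomp 0 j
  have e1 := hcomp 1 j
  have e2 := hcomp 2 j
  have eij := hcomp i j
  have hOid : O i j = O i 0 * (if (0 : Fin 3) = j then 1 else 0)
      + O i 1 * (if (1 : Fin 3) = j then 1 else 0)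
      + O i 2 * (if (2 : Fin 3) = j then 1 else 0) := by
    fin_cases i <;> fin_cases j <;> simp [Fin.ext_iff]
  simp only [Matrix.sub_apply, Matrix.one_apply, Pi.sub_apply, Matrix.mulVec, dotProduct,
    Fin.sum_univ_three]
  linear_combination (-(O i 0)) * e0 - O i 1 * e1 - O i 2 * e2 + eij + hOid

theorem almost_identity_rotation :
    ∃ C : ℝ, 0 < C ∧ ∃ δ₀ : ℝ, 0 < δ₀ ∧
    ∀ δ : ℝ, 0 < δ → δ ≤ δ₀ →
    ∀ (O : Matrix (Fin 3) (Fin 3) ℝ) (N v : Fin 3 → ℝ) (a : ℝ),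
      O * Oᵀ = 1 →
      N ⬝ᵥ N = 1 → v ⬝ᵥ v = 1 → N ⬝ᵥ v = 0 →
      ‖O.mulVec N - N‖ ≤ δ →
      0 < a → ‖O.mulVec v - a • v‖ ≤ δ →
      0 < (Matrix.of ![O.mulVec v, O.mulVec (crossProduct N v), N]).det →
      ∀ i j, |(O - 1) i j| ≤ C * δ := by
  refine ⟨100, by norm_num, 1/1000, by norm_num, ?_⟩
  intro δ hδ hδ0 O N v a hO hNN hvv hNv hON ha hOva hdet i j
  set w : Fin 3 → ℝ := crossProduct N v with hwdef
  have hO' : Oᵀ * O = 1 := mul_eq_one_comm.mp hO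
  have hpres : ∀ x y : Fin 3 → ℝ, (O *ᵥ x) ⬝ᵥ (O *ᵥ y) = x ⬝ᵥ y := by
    intro x y
    rw [dotProduct_mulVec, ← vecMul_transpose, vecMul_vecMul, hO', vecMul_one]
  -- dot facts for the frame
  have hww : w ⬝ᵥ w = 1 := by
    rw [hwdef]
    rw [cross_dot_cross N v N v, hNN, hvv, hNv, dotProduct_comm v N, hNv]
    ring
  have hNw : N ⬝ᵥ w = 0 := dot_self_cross N v
  have hvw : v ⬝ᵥ w = 0 := dot_cross_self N v
  -- component bounds for unit vectors
  have hNc : ∀ i, |N i| ≤ 1 := comp_le_of_dot zero_le_one (by rw [hNN]; norm_num)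
  have hvc : ∀ i, |v i| ≤ 1 := comp_le_of_dot zero_le_one (by rw [hvv]; norm_num)
  have hwc : ∀ i, |w i| ≤ 1 := comp_le_of_dot zero_le_one (by rw [hww]; norm_num)
  set u : Fin 3 → ℝ := O *ᵥ w with hudef
  have huu : u ⬝ᵥ u = 1 := by rw [hudef, hpres]; exact hww
  have huc : ∀ i, |u i| ≤ 1 := comp_le_of_dot zero_le_one (by rw [huu]; norm_num)
  -- error vectors
  set eN : Fin 3 → ℝ := O *ᵥ N - N with heNdef
  have heNc : ∀ i, |eN i| ≤ δ := by
    intro i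
    have := norm_le_pi_norm (O *ᵥ N - N) i
    rw [Real.norm_eq_abs] at this
    exact le_trans this hON
  set d : Fin 3 → ℝ := O *ᵥ v - a • v with hddef
  have hdc : ∀ i, |d i| ≤ δ := by
    intro i
    have := norm_le_pi_norm (O *ᵥ v - a • v) i
    rw [Real.norm_eq_abs] at this
    exact le_trans this hOva
  -- a is close to 1
  have hOvv : (O *ᵥ v) ⬝ᵥ (O *ᵥ v) = 1 := by rw [hpres]; exact hvv
  have hsplit : O *ᵥ v = a • v + d := by rw [hddef]; abel
  have hkey1 : a ^ 2 + 2 * a * (v ⬝ᵥ d) + d ⬝ᵥ d = 1 := by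
    rw [← hOvv, hsplit]
    simp only [add_dotProduct, dotProduct_add, smul_dotProduct, dotProduct_smul, smul_eq_mul]
    rw [dotProduct_comm d v, hvv]
    ring
  have ht := dotbound hvc hdc
  have hsnn : 0 ≤ d ⬝ᵥ d := by
    rw [vec3_dotProduct]; nlinarith [sq_nonneg (d 0), sq_nonneg (d 1), sq_nonneg (d 2)]
  have hs : |d ⬝ᵥ d| ≤ 3 * δ * δ := dotbound hdc hdc
  have ha1 : |a - 1| ≤ 13 * δ :=
    a_bound ha hδ hδ0 hkey1 (abs_le.mp ht).1 (abs_le.mp ht).2 hsnn (abs_le.mp hs).2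
  set ev : Fin 3 → ℝ := O *ᵥ v - v with hevdef
  have hevc : ∀ i, |ev i| ≤ 14 * δ := by
    intro i
    have h1 : ev i = d i + (a - 1) * v i := by
      rw [hevdef, hddef]
      simp [Pi.sub_apply, Pi.smul_apply, smul_eq_mul]
      ring
    rw [h1]
    calc |d i + (a - 1) * v i| ≤ |d i| + |(a - 1) * v i| := abs_add_le _ _
      _ ≤ δ + 13 * δ * 1 := by
          have := mulbound _ _ _ _ ha1 (hvc i)
          have := hdc i
          linarith
      _ = 14 * δ := by ring
  -- α and β
  have hα : |u ⬝ᵥ N| ≤ 3 * 1 * δ := by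
    have h1 : u ⬝ᵥ (O *ᵥ N) = 0 := by
      rw [hudef, hpres]; rw [dotProduct_comm]; exact hNw
    have h2 : u ⬝ᵥ N = -(u ⬝ᵥ eN) := by
      rw [heNdef, dotProduct_sub, h1]; ring
    rw [h2, abs_neg]
    exact dotbound huc heNc
  have hβ : |u ⬝ᵥ v| ≤ 3 * 1 * (14 * δ) := by
    have h1 : u ⬝ᵥ (O *ᵥ v) = 0 := by
      rw [hudef, hpres]; rw [dotProduct_comm]; exact hvw
    have h2 : u ⬝ᵥ v = -(u ⬝ᵥ ev) := by
      rw [hevdef, dotProduct_sub, h1]; ring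
    rw [h2, abs_neg]
    exact dotbound huc hevc
  -- γ
  have hγsq : (u ⬝ᵥ w) ^ 2 = 1 - (u ⬝ᵥ N) ^ 2 - (u ⬝ᵥ v) ^ 2 := by
    have hg := gram u N v
    rw [← hwdef] at hg
    rw [hg, hNN, hvv, hNv, huu]
    ring
  -- determinant
  have hOvsplit : O *ᵥ v = v + ev := by rw [hevdef]; abel
  have hDval : (Matrix.of ![O *ᵥ v, u, N]).det
      = u ⬝ᵥ w + ev ⬝ᵥ (crossProduct u N) := by
    have h1 : (Matrix.of ![O *ᵥ v, u, N]).det = (O *ᵥ v) ⬝ᵥ (crossProduct u N) :=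
      (triple_product_eq_det _ _ _).symm
    rw [h1, hOvsplit, add_dotProduct]
    congr 1
    rw [triple_product_permutation v u N, ← hwdef]
  have hcrossuN : ∀ i, |(crossProduct u N) i| ≤ 2 * 1 * 1 := crossbound huc hNc
  have hE : |ev ⬝ᵥ (crossProduct u N)| ≤ 3 * (14 * δ) * (2 * 1 * 1) := dotbound hevc hcrossuN
  have hdet' : 0 < u ⬝ᵥ w + ev ⬝ᵥ (crossProduct u N) := by
    rw [← hDval]
    have : O.mulVec (crossProduct N v) = u := by rw [hudef, hwdef]
    rw [← this] at hdet ⊢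
    exact hdet
  have hγb : 2 - 2 * (u ⬝ᵥ w) ≤ (60 * δ) ^ 2 :=
    gamma_bound hδ hδ0 hγsq (abs_le.mp hα).1 (abs_le.mp hα).2
      (abs_le.mp hβ).1 (abs_le.mp hβ).2 hdet' (abs_le.mp hE).2
  set ew : Fin 3 → ℝ := u - w with hewdef
  have hewdot : ew ⬝ᵥ ew = 2 - 2 * (u ⬝ᵥ w) := by
    rw [hewdef, sub_dotProduct, dotProduct_sub, dotProduct_sub, huu, hww,
      dotProduct_comm w u]
    ring
  have hewc : ∀ i, |ew i| ≤ 60 * δ := by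
    apply comp_le_of_dot (by linarith)
    rw [hewdot]
    exact hγb
  -- completeness of the frame
  have hNN' : N 0 * N 0 + N 1 * N 1 + N 2 * N 2 = 1 := by rw [← vec3_dotProduct]; exact hNN
  have hvv' : v 0 * v 0 + v 1 * v 1 + v 2 * v 2 = 1 := by rw [← vec3_dotProduct]; exact hvv
  have hww' : w 0 * w 0 + w 1 * w 1 + w 2 * w 2 = 1 := by rw [← vec3_dotProduct]; exact hww
  have hNv' : N 0 * v 0 + N 1 * v 1 + N 2 * v 2 = 0 := by rw [← vec3_dotProduct]; exact hNv
  have hNw' : N 0 * w 0 + N 1 * w 1 + N 2 * w 2 = 0 := by rw [← vec3_dotProduct]; exact hNw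
  have hvw' : v 0 * w 0 + v 1 * w 1 + v 2 * w 2 = 0 := by rw [← vec3_dotProduct]; exact hvw
  have hcomp := frame_complete N v w hNN' hvv' hww' hNv' hNw' hvw'
  -- conclusion
  have hkey := entry_key O N v w hcomp i j
  rw [hkey]
  have hb1 := mulbound _ _ _ _ (heNc i) (hNc j)
  have hb2 := mulbound _ _ _ _ (hevc i) (hvc j)
  have hb3 := mulbound _ _ _ _ (hewc i) (hwc j)
  calc |eN i * N j + ev i * v j + ew i * w j|
      ≤ |eN i * N j + ev i * v j| + |ew i * w j| := abs_add_le _ _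
    _ ≤ |eN i * N j| + |ev i * v j| + |ew i * w j| := by
        have := abs_add_le (eN i * N j) (ev i * v j); linarith
    _ ≤ δ * 1 + 14 * δ * 1 + 60 * δ * 1 := by linarith
    _ ≤ 100 * δ := by linarith
end
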